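/- Every 2-plane through the origin in Im ℍ is the image under the Hopf map z ↦ z̄ i z of some Levi-Civita plane: given orthonormal e₁, e₂ ∈ Im ℍ, there is a unit quaternion x with e₁ = x̄ i x, and then y = −i x e₂ is a unit quaternion with e₂ = x̄ i y, Re{x̄ i y} = 0 and ⟨x,y⟩ = 0, so span(x,y) is a Levi-Civita plane mapping onto span(e₁,e₂). -/

import Mathlib

/-- The quaternion unit `i`. -/
def qi : Quaternion ℝ := ⟨0,1,0,0⟩

/-- The Hopf map z ↦ z̄ i z. -/
noncomputable def hopf (z : Quaternion ℝ) : Quaternion ℝ := star z * qi * z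

open Quaternion

lemma qi_re : qi.re = 0 := rfl
lemma qi_imI : qi.imI = 1 := rfl
lemma qi_imJ : qi.imJ = 0 := rfl
lemma qi_imK : qi.imK = 0 := rfl

lemma star_qi : star qi = -qi := by ext <;> simp [qi_re, qi_imI, qi_imJ, qi_imK]
lemma qi_sq : qi * qi = -1 := by ext <;> simp [qi_re, qi_imI, qi_imJ, qi_imK, Quaternion.re_one, Quaternion.imI_one, Quaternion.imJ_one, Quaternion.imK_one]
lemma norm_qi : ‖qi‖ = 1 := by
  have h : Quaternion.normSq qi = 1 := by simp [Quaternion.normSq_def', qi_re, qi_imI, qi_imJ, qi_imK]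
  rw [Quaternion.normSq_eq_norm_mul_self] at h
  nlinarith [norm_nonneg qi]

lemma imag_star (e : Quaternion ℝ) (h : e.re = 0) : star e = -e := by
  ext <;> simp [h]

lemma imag_sq (e : Quaternion ℝ) (h : e.re = 0) (hn : ‖e‖ = 1) : e * e = -1 := by
  have h3 := Quaternion.star_mul_self e
  rw [imag_star e h, Quaternion.normSq_eq_norm_mul_self, hn] at h3
  have h4 : -(e * e) = (1 : Quaternion ℝ) := by rw [← neg_mul, h3]; norm_num
  exact neg_eq_iff_eq_neg.mp h4

lemma anticomm (e₁ e₂ : Quaternion ℝ) (h1 : e₁.re = 0) (h2 : e₂.re = 0)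
    (horth : (star e₁ * e₂).re = 0) : e₂ * e₁ = -(e₁ * e₂) := by
  have hre : (e₁ * e₂).re = 0 := by
    rw [imag_star e₁ h1, neg_mul, Quaternion.re_neg] at horth; linarith
  have hst : star (e₁ * e₂) = e₂ * e₁ := by
    rw [star_mul, imag_star e₁ h1, imag_star e₂ h2, neg_mul_neg]
  have key : e₁ * e₂ + star (e₁ * e₂) = ((2 * (e₁*e₂).re : ℝ) : Quaternion ℝ) := by
    ext <;> simp <;> ring
  rw [hst, hre] at key
  norm_num at key
  exact eq_neg_of_add_eq_zero_right key

lemma sq_pair_exists (c d : ℝ) : ∃ a b : ℝ, a^2 - b^2 = c ∧ 2*a*b = d := by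
  set s := Real.sqrt (c^2 + d^2) with hs
  have hs2 : s^2 = c^2 + d^2 := Real.sq_sqrt (by positivity)
  have hsc : |c| ≤ s := by
    nlinarith [Real.sqrt_nonneg (c^2+d^2), abs_nonneg c, sq_abs c]
  have h1 : 0 ≤ (s + c)/2 := by cases abs_le.mp hsc; linarith
  have h2 : 0 ≤ (s - c)/2 := by cases abs_le.mp hsc; linarith
  refine ⟨Real.sqrt ((s+c)/2), (if 0 ≤ d then 1 else -1) * Real.sqrt ((s-c)/2), ?_, ?_⟩
  · have hsgn : ((if 0 ≤ d then (1:ℝ) else -1))^2 = 1 := by split <;> norm_num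
    rw [mul_pow, hsgn, one_mul, Real.sq_sqrt h1, Real.sq_sqrt h2]; ring
  · have hmul : Real.sqrt ((s+c)/2) * Real.sqrt ((s-c)/2) = |d| / 2 := by
      rw [← Real.sqrt_mul h1]
      have : (s+c)/2 * ((s-c)/2) = d^2/4 := by nlinarith
      rw [this]
      rw [show d^2/4 = (|d|/2)^2 by rw [div_pow, sq_abs]; ring]
      exact Real.sqrt_sq (by positivity)
    rcases le_or_gt 0 d with h | h
    · simp only [if_pos h, one_mul]
      rw [mul_assoc, hmul]; rw [abs_of_nonneg h]; ring
    · simp only [if_neg (not_le.mpr h)]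
      have : 2 * Real.sqrt ((s+c)/2) * (-1 * Real.sqrt ((s-c)/2)) =
          -(2 * (Real.sqrt ((s+c)/2) * Real.sqrt ((s-c)/2))) := by ring
      rw [this, hmul, abs_of_neg h]; ring
def qj : Quaternion ℝ := ⟨0,0,1,0⟩
lemma qj_re : qj.re = 0 := rfl
lemma qj_imI : qj.imI = 0 := rfl
lemma qj_imJ : qj.imJ = 1 := rfl
lemma qj_imK : qj.imK = 0 := rfl

lemma exists_x (e₁ : Quaternion ℝ) (he₁ : e₁.re = 0) (hn₁ : ‖e₁‖ = 1) :
    ∃ x : Quaternion ℝ, ‖x‖ = 1 ∧ star x * qi * x = e₁ := by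
  by_cases hcase : e₁ = -qi
  · refine ⟨qj, ?_, ?_⟩
    · have h : Quaternion.normSq qj = 1 := by simp [Quaternion.normSq_def', qj_re, qj_imI, qj_imJ, qj_imK]
      rw [Quaternion.normSq_eq_norm_mul_self] at h
      nlinarith [norm_nonneg qj]
    · rw [hcase]; ext <;> simp [qi_re, qi_imI, qi_imJ, qi_imK, qj_re, qj_imI, qj_imJ, qj_imK]
  · set x₀ : Quaternion ℝ := 1 - qi * e₁ with hx₀def
    have hx₀ne : x₀ ≠ 0 := by
      intro h
      apply hcase
      have h1 : qi * e₁ = 1 := (sub_eq_zero.mp h).symm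
      have h2 : -qi * (qi * e₁) = -qi * 1 := by rw [h1]
      rw [← mul_assoc, neg_mul, qi_sq, neg_neg, one_mul, mul_one] at h2
      exact h2
    have hint : qi * x₀ = x₀ * e₁ := by
      rw [hx₀def, mul_sub, sub_mul, mul_one, one_mul, mul_assoc,
        imag_sq e₁ he₁ hn₁, ← mul_assoc, qi_sq]
      noncomm_ring
    have key : star x₀ * qi * x₀ = Quaternion.normSq x₀ • e₁ := by
      rw [mul_assoc, hint, ← mul_assoc, Quaternion.star_mul_self,
        Quaternion.coe_mul_eq_smul]
    refine ⟨‖x₀‖⁻¹ • x₀, ?_, ?_⟩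
    · rw [norm_smul, norm_inv, norm_norm, inv_mul_cancel₀ (norm_ne_zero_iff.mpr hx₀ne)]
    · have hnz : ‖x₀‖ ≠ 0 := norm_ne_zero_iff.mpr hx₀ne
      rw [Quaternion.star_smul, smul_mul_assoc, smul_mul_assoc, mul_smul_comm,
        smul_smul, key, smul_smul, Quaternion.normSq_eq_norm_mul_self]
      rw [show ‖x₀‖⁻¹ * ‖x₀‖⁻¹ * (‖x₀‖ * ‖x₀‖) = 1 by field_simp]
      exact one_smul _ _

lemma hopf_expand (x y q : Quaternion ℝ) (a b : ℝ) :
    star (a•x + b•y) * q * (a•x+b•y)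
      = (a*a) • (star x * q * x) + (a*b) • (star x * q * y)
        + (b*a) • (star y * q * x) + (b*b) • (star y * q * y) := by
  simp only [star_add, Quaternion.star_smul, add_mul, mul_add,
    smul_mul_assoc, mul_smul_comm, smul_add, smul_smul]
  simp only [mul_comm b a]
  abel


/- STATEMENT 14: Every 2-plane through the origin in Im ℍ is the Hopf image of a
Levi-Civita plane: given orthonormal purely imaginary e₁, e₂, there is a unit
quaternion x with e₁ = x̄ i x, and y := −i x e₂ is a unit quaternion with
e₂ = x̄ i y, Re{x̄ i y} = 0 and ⟨x,y⟩ = 0, and span(x,y) (a Levi-Civita plane)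
maps onto span(e₁,e₂). -/
theorem plane_is_hopf_image (e₁ e₂ : Quaternion ℝ)
    (he₁ : e₁.re = 0) (he₂ : e₂.re = 0)
    (hn₁ : ‖e₁‖ = 1) (hn₂ : ‖e₂‖ = 1) (horth : (star e₁ * e₂).re = 0) :
    ∃ x y : Quaternion ℝ,
      ‖x‖ = 1 ∧ star x * qi * x = e₁ ∧
      y = -(qi * x * e₂) ∧ ‖y‖ = 1 ∧ star x * qi * y = e₂ ∧
      (star x * qi * y).re = 0 ∧ (star x * y).re = 0 ∧
      hopf '' (Submodule.span ℝ {x, y} : Submodule ℝ (Quaternion ℝ))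
        = (Submodule.span ℝ {e₁, e₂} : Submodule ℝ (Quaternion ℝ)) := by
  obtain ⟨x, hx, hxe⟩ := exists_x e₁ he₁ hn₁
  obtain ⟨y, hyd⟩ : ∃ y : Quaternion ℝ, y = -(qi * x * e₂) := ⟨_, rfl⟩
  have hxx : star x * x = 1 := by
    rw [Quaternion.star_mul_self, Quaternion.normSq_eq_norm_mul_self, hx]
    norm_num
  have hy : ‖y‖ = 1 := by
    rw [hyd, norm_neg, norm_mul, norm_mul, norm_qi, hx, hn₂]; ring
  have h2 : star x * qi * y = e₂ := by
    rw [hyd]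
    rw [show star x * qi * -(qi * x * e₂) = -(star x * ((qi * qi) * (x * e₂))) by
      noncomm_ring, qi_sq]
    rw [show -(star x * ((-1 : Quaternion ℝ) * (x * e₂))) = (star x * x) * e₂ by
      noncomm_ring, hxx, one_mul]
  have h2re : (star x * qi * y).re = 0 := by rw [h2]; exact he₂
  have hsy : (star x * y).re = 0 := by
    have e : star x * y = -(e₁ * e₂) := by
      rw [hyd, show star x * -(qi * x * e₂) = -((star x * qi * x) * e₂) by
        noncomm_ring, hxe]
    have hre : (e₁ * e₂).re = 0 := by
      rw [imag_star e₁ he₁, neg_mul, Quaternion.re_neg] at horth; linarith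
    rw [e, Quaternion.re_neg, hre, neg_zero]
  have h3 : star y * qi * x = e₂ := by
    have e : star x * star qi * y = -e₂ := by
      rw [star_qi, show star x * -qi * y = -(star x * qi * y) by noncomm_ring, h2]
    calc star y * qi * x = star (star x * star qi * y) := by
          simp [star_mul, mul_assoc]
      _ = star (-e₂) := by rw [e]
      _ = e₂ := by rw [star_neg, imag_star e₂ he₂, neg_neg]
  have h4 : star y * qi * y = -e₁ := by
    have hystar : star y = -(e₂ * (star x * qi)) := by
      rw [hyd, star_neg, star_mul, star_mul, star_qi, imag_star e₂ he₂]
      noncomm_ring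
    rw [hystar, hyd]
    rw [show -(e₂ * (star x * qi)) * qi * -(qi * x * e₂)
        = e₂ * (star x * ((qi * qi) * qi) * x) * e₂ by noncomm_ring, qi_sq]
    rw [show e₂ * (star x * ((-1 : Quaternion ℝ) * qi) * x) * e₂
        = -(e₂ * (star x * qi * x) * e₂) by noncomm_ring, hxe]
    rw [anticomm e₁ e₂ he₁ he₂ horth]
    rw [show -(-(e₁ * e₂) * e₂) = e₁ * (e₂ * e₂) by noncomm_ring]
    rw [imag_sq e₂ he₂ hn₂, mul_neg_one]
  have hopf_formula : ∀ a b : ℝ,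
      hopf (a • x + b • y) = (a^2 - b^2) • e₁ + (2*a*b) • e₂ := by
    intro a b
    rw [show hopf (a • x + b • y) = star (a•x + b•y) * qi * (a•x+b•y) from rfl,
      hopf_expand, hxe, h2, h3, h4]
    rw [smul_neg, show ((a:ℝ)^2 - b^2) = a*a - b*b by ring, sub_smul,
      show (2*a*b : ℝ) = a*b + b*a by ring, add_smul]
    abel
  refine ⟨x, y, hx, hxe, hyd, hy, h2, h2re, hsy, ?_⟩
  ext w
  constructor
  · rintro ⟨z, hz, rfl⟩
    rw [SetLike.mem_coe, Submodule.mem_span_pair] at hz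
    obtain ⟨a, b, rfl⟩ := hz
    rw [SetLike.mem_coe, Submodule.mem_span_pair]
    exact ⟨a^2 - b^2, 2*a*b, (hopf_formula a b).symm⟩
  · intro hw
    rw [SetLike.mem_coe, Submodule.mem_span_pair] at hw
    obtain ⟨c, d, rfl⟩ := hw
    obtain ⟨a, b, hab1, hab2⟩ := sq_pair_exists c d
    refine ⟨a • x + b • y, ?_, ?_⟩
    · rw [SetLike.mem_coe, Submodule.mem_span_pair]
      exact ⟨a, b, rfl⟩
    · rw [hopf_formula, hab1, hab2]
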